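/- Let C be an [n = p^s·n', k = p^s·k', d] repeated-root cyclic code over F_q (q a power of the prime p, gcd(n',p) = 1) whose generator polynomial has the form g(X)^{p^s}, where g ∈ F_q[X] is the generator polynomial of a simple-root cyclic code of length n' over F_q with defining set D^F ⊆ {0,…,n'−1} of size n' − k' (so every root γ^i, i ∈ D^F, of g occurs in the generator of C with multiplicity exactly p^s). Then the folded code C^F is a linear cyclic code over F_{q^{p^s}} of length n', dimension k', and the same minimum Hamming distance d. Moreover, if the set D^F is invariant under multiplication by p^s modulo n' (which holds in particular when q = p), then C^F is a simple-root cyclic code with defining set D^F, i.e., its generator polynomial has exactly the simple roots γ^i for i ∈ D^F. -/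

import Mathlib

open Polynomial

/-- Folding of a length-`p^s * n'` word (given as a polynomial `c` over `F`) into a
length-`n'` word over the extension `L` of degree `p^s`, using the basis element `ζ`:
block `j` of `c` is mapped to the coefficient `Σ_{u < p^s} c_{u + j p^s} ζ^u` of `X^j`. -/
noncomputable def foldPoly (F L : Type*) [Field F] [Field L] [Algebra F L]
    (ζ : L) (ps n' : ℕ) (c : Polynomial F) : Polynomial L :=
  ∑ j ∈ Finset.range n',
    Polynomial.C (∑ u ∈ Finset.range ps, algebraMap F L (c.coeff (u + j * ps)) * ζ ^ u) *
      Polynomial.X ^ j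

section helpers

variable {F L : Type*} [Field F] [Field L] [Algebra F L] (ζ : L) (ps n' : ℕ)

/-- the `u`-th section of a polynomial -/
noncomputable def sectPoly (F : Type*) [Field F] (ps u : ℕ) (q : Polynomial F) : Polynomial F :=
  ∑ j ∈ Finset.range (q.natDegree + 1), Polynomial.C (q.coeff (u + j * ps)) * Polynomial.X ^ j

theorem sectPoly_coeff (hps : 0 < ps) (u : ℕ) (q : Polynomial F) (j : ℕ) :
    (sectPoly F ps u q).coeff j = q.coeff (u + j * ps) := by
  unfold sectPoly
  rw [finset_sum_coeff]
  simp only [coeff_C_mul, coeff_X_pow, mul_ite, mul_one, mul_zero]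
  rw [Finset.sum_ite_eq (Finset.range (q.natDegree + 1)) j (fun j => q.coeff (u + j * ps))]
  split_ifs with h
  · rfl
  · rw [Finset.mem_range, not_lt] at h
    rw [eq_comm, Polynomial.coeff_eq_zero_of_natDegree_lt]
    calc q.natDegree < q.natDegree + 1 := Nat.lt_succ_self _
    _ ≤ j := h
    _ ≤ j * ps := Nat.le_mul_of_pos_right _ hps
    _ ≤ u + j * ps := Nat.le_add_left _ _

theorem foldPoly_coeff (c : Polynomial F) (j : ℕ) :
    (foldPoly F L ζ ps n' c).coeff j =
      if j < n' then ∑ u ∈ Finset.range ps, algebraMap F L (c.coeff (u + j * ps)) * ζ ^ u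
      else 0 := by
  unfold foldPoly
  rw [finset_sum_coeff]
  simp only [coeff_C_mul, coeff_X_pow, mul_ite, mul_one, mul_zero]
  rw [Finset.sum_ite_eq (Finset.range n') j]
  simp [Finset.mem_range]

theorem foldPoly_degree_lt (c : Polynomial F) :
    (foldPoly F L ζ ps n' c).degree < (n' : WithBot ℕ) := by
  rw [Polynomial.degree_lt_iff_coeff_zero]
  intro m hm
  rw [foldPoly_coeff]
  rw [if_neg]
  exact not_lt.2 (by exact_mod_cast hm)

end helpers

theorem block_index_eq {ps u u' j j' : ℕ} (hu : u < ps) (hu' : u' < ps)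
    (h : u + j * ps = u' + j' * ps) : u = u' ∧ j = j' := by
  have hps : 0 < ps := lt_of_le_of_lt (Nat.zero_le u) hu
  have h1 : (u + j * ps) % ps = (u' + j' * ps) % ps := by rw [h]
  rw [Nat.add_mul_mod_self_right, Nat.add_mul_mod_self_right,
    Nat.mod_eq_of_lt hu, Nat.mod_eq_of_lt hu'] at h1
  subst h1
  refine ⟨rfl, ?_⟩
  have := Nat.add_left_cancel h
  exact Nat.eq_of_mul_eq_mul_right hps this

theorem master_coeff {F : Type*} [Field F] {ps : ℕ} (hps : 0 < ps) (e q : Polynomial F)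
    {u : ℕ} (hu : u < ps) (j : ℕ) :
    (Polynomial.expand F ps e * q).coeff (u + j * ps) = (e * sectPoly F ps u q).coeff j := by
  rw [Polynomial.coeff_mul, Polynomial.coeff_mul]
  rw [Finset.Nat.sum_antidiagonal_eq_sum_range_succ_mk,
    Finset.Nat.sum_antidiagonal_eq_sum_range_succ_mk]
  have hsub : (Finset.range (j+1)).image (· * ps) ⊆ Finset.range (u + j * ps + 1) := by
    intro a ha
    simp only [Finset.mem_image, Finset.mem_range] at ha ⊢
    obtain ⟨i, hi, rfl⟩ := ha
    have h1 : i * ps ≤ j * ps := Nat.mul_le_mul_right ps (Nat.lt_succ_iff.1 hi)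
    have h2 : j * ps ≤ u + j * ps := Nat.le_add_left _ _
    exact Nat.lt_succ_of_le (le_trans h1 h2)
  rw [← Finset.sum_subset hsub]
  · rw [Finset.sum_image (fun a _ b _ hab => Nat.eq_of_mul_eq_mul_right hps hab)]
    apply Finset.sum_congr rfl
    intro i hi
    rw [Finset.mem_range, Nat.lt_succ_iff] at hi
    rw [Polynomial.coeff_expand_mul hps, sectPoly_coeff _ hps]
    have h1 : i * ps ≤ j * ps := Nat.mul_le_mul_right ps hi
    rw [Nat.add_sub_assoc h1, ← Nat.sub_mul]
  · intro a ha hna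
    by_cases hdvd : ps ∣ a
    · exfalso
      apply hna
      obtain ⟨i, rfl⟩ := hdvd
      rw [Finset.mem_range] at ha
      simp only [Finset.mem_image, Finset.mem_range]
      refine ⟨i, ?_, by ring⟩
      by_contra hij
      push_neg at hij
      have h1 : (j+1) * ps ≤ i * ps := Nat.mul_le_mul_right ps hij
      have h2 : ps * i ≤ u + j * ps := Nat.lt_succ_iff.1 ha
      have h3 : (j+1) * ps = j * ps + ps := by ring
      have h4 : ps * i = i * ps := Nat.mul_comm _ _
      linarith
    · rw [Polynomial.coeff_expand hps, if_neg hdvd, zero_mul]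

section helpers2

variable {F L : Type*} [Field F] [Field L] [Algebra F L]

theorem foldPoly_expand_mul (ζ : L) {ps : ℕ} (n' : ℕ) (hps : 0 < ps) (e q : Polynomial F)
    (hdeg : ∀ u, u < ps → (e * sectPoly F ps u q).degree < (n' : WithBot ℕ)) :
    foldPoly F L ζ ps n' (Polynomial.expand F ps e * q) =
      e.map (algebraMap F L) *
        ∑ u ∈ Finset.range ps,
          Polynomial.C (ζ ^ u) * (sectPoly F ps u q).map (algebraMap F L) := by
  ext j
  rw [foldPoly_coeff, Finset.mul_sum, Polynomial.finset_sum_coeff]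
  have term : ∀ u, (Polynomial.map (algebraMap F L) e *
      (Polynomial.C (ζ ^ u) * Polynomial.map (algebraMap F L) (sectPoly F ps u q))).coeff j =
      algebraMap F L ((e * sectPoly F ps u q).coeff j) * ζ ^ u := by
    intro u
    rw [mul_left_comm, Polynomial.coeff_C_mul, ← Polynomial.map_mul, Polynomial.coeff_map]
    ring
  split_ifs with hj
  · refine Finset.sum_congr rfl fun u hu => ?_
    rw [Finset.mem_range] at hu
    rw [term u, master_coeff hps e q hu j]
  · refine (Finset.sum_eq_zero fun u hu => ?_).symm
    rw [Finset.mem_range] at hu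
    rw [term u, Polynomial.coeff_eq_zero_of_degree_lt, map_zero, zero_mul]
    refine lt_of_lt_of_le (hdeg u hu) ?_
    exact_mod_cast Nat.cast_le.2 (not_lt.1 hj)

theorem fold_linindep (ζ : L) {ps : ℕ} (bζ : Module.Basis (Fin ps) F L)
    (hbζ : ∀ u : Fin ps, bζ u = ζ ^ (u : ℕ)) (a : ℕ → F)
    (h : ∑ u ∈ Finset.range ps, algebraMap F L (a u) * ζ ^ u = 0) :
    ∀ u, u < ps → a u = 0 := by
  have h2 : ∑ u : Fin ps, a (u : ℕ) • bζ u = 0 := by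
    rw [← h, ← Fin.sum_univ_eq_sum_range (fun u => algebraMap F L (a u) * ζ ^ u)]
    refine Finset.sum_congr rfl fun u _ => ?_
    rw [hbζ u, Algebra.smul_def]
  have := Fintype.linearIndependent_iff.mp bζ.linearIndependent (fun u => a (u : ℕ)) h2
  intro u hu
  exact this ⟨u, hu⟩

/-- the preimage word used in the backward direction -/
noncomputable def qOfPoly {ps : ℕ} (bζ : Module.Basis (Fin ps) F L) (k' : ℕ) (b : Polynomial L) :
    Polynomial F :=
  ∑ j ∈ Finset.range k', ∑ u : Fin ps,
    Polynomial.C (bζ.repr (b.coeff j) u) * Polynomial.X ^ ((u : ℕ) + j * ps)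

theorem qOfPoly_coeff {ps : ℕ} (bζ : Module.Basis (Fin ps) F L) (k' : ℕ) (b : Polynomial L)
    (hb : b.degree < (k' : WithBot ℕ)) (j₀ : ℕ) (u₀ : Fin ps) :
    (qOfPoly bζ k' b).coeff ((u₀ : ℕ) + j₀ * ps) = bζ.repr (b.coeff j₀) u₀ := by
  unfold qOfPoly
  rw [Polynomial.finset_sum_coeff]
  simp only [Polynomial.finset_sum_coeff, Polynomial.coeff_C_mul, Polynomial.coeff_X_pow,
    mul_ite, mul_one, mul_zero]
  by_cases hj₀ : j₀ < k'
  · rw [Finset.sum_eq_single j₀]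
    · rw [Finset.sum_eq_single u₀]
      · rw [if_pos rfl]
      · intro u _ hu
        rw [if_neg]
        intro hc
        exact hu (Fin.ext (block_index_eq u.2 u₀.2 hc.symm).1)
      · intro hmem
        exact absurd (Finset.mem_univ u₀) hmem
    · intro j _ hj
      refine Finset.sum_eq_zero fun u _ => ?_
      rw [if_neg]
      intro hc
      exact hj (block_index_eq u.2 u₀.2 hc.symm).2
    · intro hmem
      exact absurd (Finset.mem_range.2 hj₀) hmem
  · have hb0 : b.coeff j₀ = 0 := by
      refine Polynomial.coeff_eq_zero_of_degree_lt (lt_of_lt_of_le hb ?_)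
      exact_mod_cast Nat.cast_le.2 (not_lt.1 hj₀)
    rw [hb0, map_zero, Finsupp.coe_zero, Pi.zero_apply]
    refine Finset.sum_eq_zero fun j hj => ?_
    refine Finset.sum_eq_zero fun u _ => ?_
    rw [if_neg]
    intro hc
    rw [Finset.mem_range] at hj
    exact hj₀ ((block_index_eq u.2 u₀.2 hc.symm).2 ▸ hj)

theorem coeff_shift_expand {ps u₀ u j : ℕ} (hu₀ : u₀ < ps) (hu : u < ps) (s : Polynomial F) :
    (Polynomial.X ^ u₀ * Polynomial.expand F ps s).coeff (u + j * ps) =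
      if u = u₀ then s.coeff j else 0 := by
  have hps : 0 < ps := lt_of_le_of_lt (Nat.zero_le u) hu
  rw [mul_comm, Polynomial.coeff_mul_X_pow']
  by_cases h : u = u₀
  · subst h
    rw [if_pos (Nat.le_add_right _ _), if_pos rfl, Nat.add_sub_cancel_left,
      Polynomial.coeff_expand hps, if_pos (dvd_mul_left ps j), Nat.mul_div_cancel _ hps]
  · rw [if_neg h]
    by_cases hle : u₀ ≤ u + j * ps
    · rw [if_pos hle, Polynomial.coeff_expand hps, if_neg, ]
      intro hdvd
      obtain ⟨i, hi⟩ := hdvd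
      have heq : u + j * ps = u₀ + i * ps := by
        have h2 := Nat.add_sub_cancel' hle
        rw [hi, mul_comm] at h2
        exact h2.symm
      exact h (block_index_eq hu hu₀ heq).1
    · rw [if_neg hle]

theorem sect_shift_expand {ps u₀ u : ℕ} (hu₀ : u₀ < ps) (hu : u < ps) (s : Polynomial F) :
    sectPoly F ps u (Polynomial.X ^ u₀ * Polynomial.expand F ps s) =
      if u = u₀ then s else 0 := by
  have hps : 0 < ps := lt_of_le_of_lt (Nat.zero_le u) hu
  ext j
  rw [sectPoly_coeff _ hps, coeff_shift_expand hu₀ hu]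
  split_ifs with h <;> simp

end helpers2


/-- **Folding a repeated-root cyclic code.**  Let `C` be the
`[n = p^s n', k = p^s k', d]` repeated-root cyclic code over `F_q` whose generator
polynomial is `g^{p^s}`, where `g` generates a simple-root cyclic code of length `n'`
with defining set `D^F ⊆ {0,…,n'-1}` of size `n' - k'` (so `g` maps over the extension
`Ω` to `Π_{i ∈ D^F} (X - γ^i)` with `γ` of order `n'`).  Fold codewords via the basis
`(1, ζ, …, ζ^{p^s-1})` of `L = F_{q^{p^s}}` over `F_q`.  Then the folded code `C^F`
has all codewords of degree `< n'` (length `n'`), is linear over `L` and cyclic, has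
`|L|^{k'}` codewords (dimension `k'`), and has the same minimum Hamming distance `d`.
Moreover, if `D^F` is invariant under multiplication by `p^s` modulo `n'`, then `C^F`
is the simple-root cyclic code with defining set `D^F`, i.e. it has a monic generator
polynomial `g^F` whose roots are exactly the simple roots `γ^i`, `i ∈ D^F`. -/
theorem folded_repeatedRoot_cyclic_code
    {F L Ω : Type*} [Field F] [Fintype F] [Field L] [Fintype L] [Field Ω]
    [Algebra F L] [Algebra F Ω] [Algebra L Ω] [IsScalarTower F L Ω]
    (p t s n' k' d : ℕ) (hp : p.Prime) (hqF : Fintype.card F = p ^ t) (ht : 0 < t)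
    (hn'p : Nat.Coprime n' p) (hk' : k' ≤ n')
    (hqL : Fintype.card L = (p ^ t) ^ p ^ s)
    (ζ : L) (bζ : Module.Basis (Fin (p ^ s)) F L) (hbζ : ∀ u : Fin (p ^ s), bζ u = ζ ^ (u : ℕ))
    (γ : Ωˣ) (hγ : orderOf γ = n')
    (g : F[X]) (hg_monic : g.Monic)
    (DF : Finset ℕ) (hDF_sub : ∀ i ∈ DF, i < n') (hDF_card : DF.card = n' - k')
    (hg_roots : g.map (algebraMap F Ω) = ∏ i ∈ DF, (X - C ((γ ^ i : Ωˣ) : Ω)))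
    (hd : IsLeast {w | ∃ c : F[X],
        c.degree < ((p ^ s * n' : ℕ) : WithBot ℕ) ∧ g ^ p ^ s ∣ c ∧ c ≠ 0 ∧
          w = c.support.card} d) :
    letI CF : Set (Polynomial L) := {cf | ∃ c : F[X],
      c.degree < ((p ^ s * n' : ℕ) : WithBot ℕ) ∧ g ^ p ^ s ∣ c ∧
        cf = foldPoly F L ζ (p ^ s) n' c}
    (∀ cf ∈ CF, cf.degree < (n' : WithBot ℕ)) ∧
    (∀ cf₁ ∈ CF, ∀ cf₂ ∈ CF, cf₁ + cf₂ ∈ CF) ∧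
    (∀ a : L, ∀ cf ∈ CF, a • cf ∈ CF) ∧
    (∀ cf ∈ CF, (X * cf) %ₘ (X ^ n' - 1) ∈ CF) ∧
    Nat.card CF = Fintype.card L ^ k' ∧
    IsLeast {w | ∃ cf ∈ CF, cf ≠ 0 ∧ w = cf.support.card} d ∧
    ((∀ i ∈ DF, (p ^ s * i) % n' ∈ DF) →
      ∃ gF : Polynomial L, gF.Monic ∧
        gF.map (algebraMap L Ω) = ∏ i ∈ DF, (X - C ((γ ^ i : Ωˣ) : Ω)) ∧
        ∀ cf : Polynomial L, cf ∈ CF ↔ cf.degree < (n' : WithBot ℕ) ∧ gF ∣ cf) := by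
  set CF : Set (Polynomial L) := {cf | ∃ c : F[X],
      c.degree < ((p ^ s * n' : ℕ) : WithBot ℕ) ∧ g ^ p ^ s ∣ c ∧
        cf = foldPoly F L ζ (p ^ s) n' c} with hCF_def
  have hmemCF : ∀ cf : Polynomial L, cf ∈ CF ↔ ∃ c : F[X],
      c.degree < ((p ^ s * n' : ℕ) : WithBot ℕ) ∧ g ^ p ^ s ∣ c ∧
        cf = foldPoly F L ζ (p ^ s) n' c := by
    intro cf
    rw [hCF_def]
    rfl
  have hps : 0 < p ^ s := pow_pos hp.pos s
  have hn'0 : 0 < n' := by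
    rcases Nat.eq_zero_or_pos n' with h | h
    · exfalso
      rw [h, Nat.coprime_zero_left] at hn'p
      exact hp.one_lt.ne' hn'p
    · exact h
  -- characteristic
  haveI : Fact p.Prime := ⟨hp⟩
  haveI hcharF : CharP F p := by
    obtain ⟨n, hrp, hcard⟩ := FiniteField.card F (ringChar F)
    have h1 : p ∣ ringChar F ^ (n : ℕ) := by
      rw [← hcard, hqF]
      exact dvd_pow_self p ht.ne'
    have h2 : p = ringChar F :=
      (Nat.prime_dvd_prime_iff_eq hp hrp).1 (hp.dvd_of_dvd_pow h1)
    rw [h2]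
    infer_instance
  haveI hcharΩ : CharP Ω p := charP_of_injective_algebraMap (algebraMap F Ω).injective p
  -- the contracted generator ĝ
  set gh : F[X] := g.map (iterateFrobenius F p s) with hgh_def
  have hfrob_pow : ((frobenius F p ^ s : F →+* F) : F →+* F) = iterateFrobenius F p s := by
    ext x
    rw [RingHom.coe_pow, iterate_frobenius, iterateFrobenius_def]
  have hgps : g ^ p ^ s = Polynomial.expand F (p ^ s) gh := by
    have h1 := Polynomial.map_iterateFrobenius_expand (p := p) g s
    rw [Polynomial.map_expand] at h1
    exact h1.symm
  have hgh_monic : gh.Monic := hg_monic.map _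
  have hgdeg : g.natDegree = DF.card := by
    have h1 := congrArg Polynomial.natDegree hg_roots
    rw [Polynomial.natDegree_map_eq_of_injective (algebraMap F Ω).injective] at h1
    have h2 : (∏ i ∈ DF, (X - C ((γ ^ i : Ωˣ) : Ω))).natDegree = DF.card := by
      rw [Polynomial.natDegree_prod _ _ (fun i _ => Polynomial.X_sub_C_ne_zero _)]
      rw [Finset.sum_congr rfl (fun i _ => Polynomial.natDegree_X_sub_C _)]
      rw [Finset.sum_const, smul_eq_mul, mul_one]
    rw [h2] at h1
    exact h1
  have hmk : DF.card + k' = n' := by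
    rw [hDF_card]
    omega
  have hghdeg : gh.natDegree = DF.card := by
    rw [hgh_def, Polynomial.natDegree_map_eq_of_injective (RingHom.injective _)]
    exact hgdeg
  set gL : Polynomial L := gh.map (algebraMap F L) with hgL_def
  have hgL_monic : gL.Monic := hgh_monic.map _
  have hgL_ne : gL ≠ 0 := hgL_monic.ne_zero
  have hgLdeg : gL.natDegree = DF.card := by
    rw [hgL_def, Polynomial.natDegree_map_eq_of_injective (algebraMap F L).injective]
    exact hghdeg
  -- γ powers are injective below n'
  have hγinj : ∀ i ∈ DF, ∀ i' ∈ DF, (γ : Ωˣ) ^ i = γ ^ i' → i = i' := by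
    intro i hi i' hi' h
    have := pow_eq_pow_iff_modEq.1 h
    rw [hγ] at this
    rw [← Nat.mod_eq_of_lt (hDF_sub i hi), ← Nat.mod_eq_of_lt (hDF_sub i' hi')]
    exact this
  -- divisibility of X^n' - 1
  have hprod_dvd : (∏ i ∈ DF, (X - C ((γ ^ i : Ωˣ) : Ω))) ∣ (X ^ n' - 1 : Polynomial Ω) := by
    have hroot : ∀ i ∈ DF, ((γ ^ i : Ωˣ) : Ω) ∈ (X ^ n' - 1 : Polynomial Ω).roots := by
      intro i hi
      rw [Polynomial.mem_roots']
      constructor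
      · intro h0
        have := congrArg Polynomial.natDegree h0
        rw [Polynomial.natDegree_zero] at this
        have h2 : (X ^ n' - 1 : Polynomial Ω).natDegree = n' := by
          have h3 := Polynomial.natDegree_X_pow_sub_C (n := n') (r := (1 : Ω))
          simpa using h3
        omega
      · rw [Polynomial.IsRoot, Polynomial.eval_sub, Polynomial.eval_pow, Polynomial.eval_X,
          Polynomial.eval_one]
        have : ((γ ^ i : Ωˣ) : Ω) ^ n' = (((γ ^ i) ^ n' : Ωˣ) : Ω) := by
          push_cast
          ring
        rw [this, ← pow_mul, mul_comm i n', pow_mul, ← hγ, pow_orderOf_eq_one, one_pow,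
          Units.val_one, sub_self]
    have hM : (DF.val.map (fun i => ((γ ^ i : Ωˣ) : Ω))) ≤ (X ^ n' - 1 : Polynomial Ω).roots := by
      rw [Multiset.le_iff_subset]
      · intro a ha
        rw [Multiset.mem_map] at ha
        obtain ⟨i, hi, rfl⟩ := ha
        exact hroot i hi
      · refine Multiset.Nodup.map_on ?_ DF.nodup
        intro i hi i' hi' h
        exact hγinj i hi i' hi' (Units.ext h)
    calc (∏ i ∈ DF, (X - C ((γ ^ i : Ωˣ) : Ω)))
        = ((DF.val.map (fun i => ((γ ^ i : Ωˣ) : Ω))).map (fun a => X - C a)).prod := by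
          rw [Multiset.map_map]
          rfl
      _ ∣ ((X ^ n' - 1 : Polynomial Ω).roots.map (fun a => X - C a)).prod :=
          Multiset.prod_dvd_prod_of_le (Multiset.map_le_map hM)
      _ ∣ (X ^ n' - 1 : Polynomial Ω) := Polynomial.prod_multiset_X_sub_C_dvd _
  have hg_dvd : g ∣ (X ^ n' - 1 : F[X]) := by
    rw [← Polynomial.map_dvd_map (algebraMap F Ω) (algebraMap F Ω).injective hg_monic]
    rw [hg_roots]
    have : (X ^ n' - 1 : F[X]).map (algebraMap F Ω) = X ^ n' - 1 := by
      simp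
    rw [this]
    exact hprod_dvd
  have hgh_dvd : gh ∣ (X ^ n' - 1 : F[X]) := by
    obtain ⟨w, hw⟩ := hg_dvd
    refine ⟨w.map (iterateFrobenius F p s), ?_⟩
    have h1 : (X ^ n' - 1 : F[X]).map (iterateFrobenius F p s) = X ^ n' - 1 := by
      simp
    rw [← h1, hw, Polynomial.map_mul]
  have hgL_dvd : gL ∣ (X ^ n' - 1 : Polynomial L) := by
    obtain ⟨w, hw⟩ := hgh_dvd
    refine ⟨w.map (algebraMap F L), ?_⟩
    have h1 : (X ^ n' - 1 : F[X]).map (algebraMap F L) = X ^ n' - 1 := by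
      simp
    rw [← h1, hw, hgL_def, Polynomial.map_mul]
  -- fold of zero
  have hfold0 : foldPoly F L ζ (p ^ s) n' (0 : F[X]) = 0 := by
    ext j
    rw [foldPoly_coeff]
    simp
  -- degree facts
  have hsectdeg : ∀ q : F[X], q.degree < ((p ^ s * k' : ℕ) : WithBot ℕ) →
      ∀ u, u < p ^ s → (sectPoly F (p ^ s) u q).degree < (k' : WithBot ℕ) := by
    intro q hq u hu
    rw [Polynomial.degree_lt_iff_coeff_zero]
    intro j hj
    rw [sectPoly_coeff _ hps]
    apply Polynomial.coeff_eq_zero_of_degree_lt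
    refine lt_of_lt_of_le hq ?_
    have h1 : p ^ s * k' ≤ u + j * p ^ s := by
      calc p ^ s * k' = k' * p ^ s := mul_comm _ _
        _ ≤ j * p ^ s := Nat.mul_le_mul_right _ hj
        _ ≤ u + j * p ^ s := Nat.le_add_left _ _
    exact_mod_cast h1
  have hmuldeg : ∀ sct : F[X], sct.degree < (k' : WithBot ℕ) →
      (gh * sct).degree < (n' : WithBot ℕ) := by
    intro sct hsct
    rcases eq_or_ne sct 0 with rfl | hne
    · rw [mul_zero, Polynomial.degree_zero]
      exact WithBot.bot_lt_coe n'
    · rw [Polynomial.degree_mul, Polynomial.degree_eq_natDegree hgh_monic.ne_zero,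
        Polynomial.degree_eq_natDegree hne, hghdeg]
      have h1 : sct.natDegree < k' := by
        rw [Polynomial.degree_eq_natDegree hne] at hsct
        exact_mod_cast hsct
      have h2 : DF.card + sct.natDegree < n' := by omega
      exact_mod_cast h2
  have hqdeg : ∀ q : F[X], q ≠ 0 →
      (Polynomial.expand F (p ^ s) gh * q).degree < ((p ^ s * n' : ℕ) : WithBot ℕ) →
      q.degree < ((p ^ s * k' : ℕ) : WithBot ℕ) := by
    intro q hq hdeg
    have hexp_ne : Polynomial.expand F (p ^ s) gh ≠ 0 := by
      rw [Polynomial.expand_ne_zero hps]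
      exact hgh_monic.ne_zero
    have hc0 : Polynomial.expand F (p ^ s) gh * q ≠ 0 := mul_ne_zero hexp_ne hq
    rw [Polynomial.degree_eq_natDegree hc0] at hdeg
    have hnd : (Polynomial.expand F (p ^ s) gh * q).natDegree < p ^ s * n' := by
      exact_mod_cast hdeg
    rw [Polynomial.natDegree_mul hexp_ne hq, Polynomial.natDegree_expand, hghdeg] at hnd
    rw [Polynomial.degree_eq_natDegree hq]
    have h1 : q.natDegree < p ^ s * k' := by
      have e1 : DF.card * p ^ s = p ^ s * DF.card := mul_comm _ _
      have e2 : p ^ s * n' = p ^ s * DF.card + p ^ s * k' := by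
        rw [← Nat.mul_add, hmk]
      linarith
    exact_mod_cast h1
  -- THE KEY CHARACTERIZATION
  have key : ∀ cf : Polynomial L, cf ∈ CF ↔
      ∃ b : Polynomial L, b.degree < (k' : WithBot ℕ) ∧ cf = gL * b := by
    intro cf
    constructor
    · rintro ⟨c, hcdeg, ⟨q, rfl⟩, rfl⟩
      rcases eq_or_ne q 0 with rfl | hq
      · refine ⟨0, ?_, ?_⟩
        · rw [Polynomial.degree_zero]
          exact WithBot.bot_lt_coe k'
        · rw [mul_zero, hfold0, mul_zero]
      · rw [hgps] at hcdeg
        have hqd := hqdeg q hq hcdeg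
        have hsd := fun u hu => hsectdeg q hqd u hu
        have hfold := foldPoly_expand_mul ζ n' hps gh q (fun u hu => hmuldeg _ (hsd u hu))
        refine ⟨∑ u ∈ Finset.range (p ^ s),
          C (ζ ^ u) * (sectPoly F (p ^ s) u q).map (algebraMap F L), ?_, ?_⟩
        · refine lt_of_le_of_lt (Polynomial.degree_sum_le _ _) ?_
          have hbotk : (⊥ : WithBot ℕ) < (k' : WithBot ℕ) := WithBot.bot_lt_coe k'
          refine (Finset.sup_lt_iff hbotk).2 fun u hu => ?_
          rw [Finset.mem_range] at hu
          calc (C (ζ ^ u) * (sectPoly F (p ^ s) u q).map (algebraMap F L)).degree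
              ≤ ((sectPoly F (p ^ s) u q).map (algebraMap F L)).degree := by
                rw [← Polynomial.smul_eq_C_mul]
                exact Polynomial.degree_smul_le _ _
            _ = (sectPoly F (p ^ s) u q).degree :=
                Polynomial.degree_map_eq_of_injective (algebraMap F L).injective _
            _ < (k' : WithBot ℕ) := hsd u hu
        · rw [hgps, hfold]
    · rintro ⟨b, hb, rfl⟩
      set q : F[X] := qOfPoly bζ k' b with hq_def
      have hqc : ∀ (u : ℕ) (hu : u < p ^ s) (j : ℕ),
          q.coeff (u + j * p ^ s) = bζ.repr (b.coeff j) ⟨u, hu⟩ :=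
        fun u hu j => qOfPoly_coeff bζ k' b hb j ⟨u, hu⟩
      have hsd : ∀ u, u < p ^ s → (sectPoly F (p ^ s) u q).degree < (k' : WithBot ℕ) := by
        intro u hu
        rw [Polynomial.degree_lt_iff_coeff_zero]
        intro j hj
        rw [sectPoly_coeff _ hps, hqc u hu j]
        have hb0 : b.coeff j = 0 := Polynomial.coeff_eq_zero_of_degree_lt
          (lt_of_lt_of_le hb (by exact_mod_cast hj))
        rw [hb0]
        simp
      refine ⟨Polynomial.expand F (p ^ s) gh * q, ?_, ?_, ?_⟩
      · rw [Polynomial.degree_lt_iff_coeff_zero]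
        intro N hN
        have hu : N % p ^ s < p ^ s := Nat.mod_lt _ hps
        have h1 := master_coeff hps gh q hu (N / p ^ s)
        rw [Nat.mod_add_div'] at h1
        rw [h1]
        apply Polynomial.coeff_eq_zero_of_degree_lt
        refine lt_of_lt_of_le (hmuldeg _ (hsd _ hu)) ?_
        have h2 : n' ≤ N / p ^ s := Nat.le_div_iff_mul_le hps |>.2 (by
          calc n' * p ^ s = p ^ s * n' := mul_comm _ _
            _ ≤ N := hN)
        exact_mod_cast h2
      · rw [hgps]
        exact Dvd.intro _ rfl
      · rw [foldPoly_expand_mul ζ n' hps gh q (fun u hu => hmuldeg _ (hsd u hu))]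
        rw [← hgL_def]
        congr 1
        ext j
        rw [Polynomial.finset_sum_coeff]
        rw [← Fin.sum_univ_eq_sum_range
          (fun u => (C (ζ ^ u) * (sectPoly F (p ^ s) u q).map (algebraMap F L)).coeff j)]
        rw [← bζ.sum_repr (b.coeff j)]
        refine Finset.sum_congr rfl fun u _ => ?_
        rw [Polynomial.coeff_C_mul, Polynomial.coeff_map, sectPoly_coeff _ hps, hqc u u.2 j,
          hbζ u, Algebra.smul_def]
        rw [Fin.eta]
        ring
  -- lower bound for weights of nonzero folded codewords
  have hlb : ∀ w ∈ {w | ∃ cf ∈ CF, cf ≠ 0 ∧ w = cf.support.card}, d ≤ w := by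
    rintro w ⟨cf, hcf, hcfne, rfl⟩
    obtain ⟨c, hcdeg, ⟨q, rfl⟩, rfl⟩ := hcf
    rcases eq_or_ne q 0 with rfl | hq
    · exact absurd (by rw [mul_zero, hfold0]) hcfne
    rw [hgps] at hcdeg ⊢
    have hqd := hqdeg q hq hcdeg
    have hsd := fun u hu => hsectdeg q hqd u hu
    set u₀ := q.natDegree % p ^ s with hu₀_def
    have hu₀ : u₀ < p ^ s := Nat.mod_lt _ hps
    set sct : F[X] := sectPoly F (p ^ s) u₀ q with hsct_def
    have hsctN : sct.coeff (q.natDegree / p ^ s) = q.coeff q.natDegree := by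
      rw [hsct_def, sectPoly_coeff _ hps, hu₀_def, Nat.mod_add_div']
    have hsct_ne : sct ≠ 0 := by
      intro h0
      rw [h0, Polynomial.coeff_zero] at hsctN
      exact Polynomial.leadingCoeff_ne_zero.2 hq hsctN.symm
    set c' : F[X] := Polynomial.expand F (p ^ s) gh *
      (X ^ u₀ * Polynomial.expand F (p ^ s) sct) with hc'_def
    have hc'_coeff : ∀ u, u < p ^ s → ∀ j,
        c'.coeff (u + j * p ^ s) = if u = u₀ then (gh * sct).coeff j else 0 := by
      intro u hu j
      rw [hc'_def, master_coeff hps gh _ hu j, sect_shift_expand hu₀ hu]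
      split_ifs with h
      · rfl
      · rw [mul_zero, Polynomial.coeff_zero]
    have hgs_deg : (gh * sct).degree < (n' : WithBot ℕ) := hmuldeg sct (hsd u₀ hu₀)
    have hc'deg : c'.degree < ((p ^ s * n' : ℕ) : WithBot ℕ) := by
      rw [Polynomial.degree_lt_iff_coeff_zero]
      intro N hN
      have hu : N % p ^ s < p ^ s := Nat.mod_lt _ hps
      have h1 := hc'_coeff (N % p ^ s) hu (N / p ^ s)
      rw [Nat.mod_add_div'] at h1
      rw [h1]
      split_ifs with h
      · apply Polynomial.coeff_eq_zero_of_degree_lt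
        refine lt_of_lt_of_le hgs_deg ?_
        have h2 : n' ≤ N / p ^ s := Nat.le_div_iff_mul_le hps |>.2 (by
          calc n' * p ^ s = p ^ s * n' := mul_comm _ _
            _ ≤ N := hN)
        exact_mod_cast h2
      · rfl
    have hgs_ne : gh * sct ≠ 0 := mul_ne_zero hgh_monic.ne_zero hsct_ne
    have hc'_ne : c' ≠ 0 := by
      intro h0
      have h1 := hc'_coeff u₀ hu₀ ((gh * sct).natDegree)
      rw [if_pos rfl, h0, Polynomial.coeff_zero] at h1
      exact Polynomial.leadingCoeff_ne_zero.2 hgs_ne h1.symm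
    have hdvd' : g ^ p ^ s ∣ c' := by
      rw [hgps, hc'_def]
      exact Dvd.intro _ rfl
    have hd_le : d ≤ c'.support.card := hd.2 ⟨c', hc'deg, hdvd', hc'_ne, rfl⟩
    have hsub1 : c'.support ⊆ (gh * sct).support.image (fun j => u₀ + j * p ^ s) := by
      intro N hNmem
      rw [Polynomial.mem_support_iff] at hNmem
      have hu : N % p ^ s < p ^ s := Nat.mod_lt _ hps
      have h1 := hc'_coeff (N % p ^ s) hu (N / p ^ s)
      rw [Nat.mod_add_div'] at h1
      rw [h1] at hNmem
      by_cases h : N % p ^ s = u₀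
      · rw [if_pos h] at hNmem
        rw [Finset.mem_image]
        refine ⟨N / p ^ s, Polynomial.mem_support_iff.2 hNmem, ?_⟩
        rw [← h, Nat.mod_add_div']
      · rw [if_neg h] at hNmem
        exact absurd rfl hNmem
    have hsub2 : (gh * sct).support ⊆
        (foldPoly F L ζ (p ^ s) n' (Polynomial.expand F (p ^ s) gh * q)).support := by
      intro j hj
      rw [Polynomial.mem_support_iff] at hj ⊢
      intro h0
      apply hj
      have hjn : j < n' := by
        have h1 := Polynomial.le_degree_of_ne_zero hj
        have h2 := lt_of_le_of_lt h1 hgs_deg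
        exact_mod_cast h2
      rw [foldPoly_coeff, if_pos hjn] at h0
      have h3 := fold_linindep ζ bζ hbζ
        (fun u => (Polynomial.expand F (p ^ s) gh * q).coeff (u + j * p ^ s)) h0 u₀ hu₀
      have h3' : (Polynomial.expand F (p ^ s) gh * q).coeff (u₀ + j * p ^ s) = 0 := h3
      rw [master_coeff hps gh q hu₀ j] at h3'
      exact h3'
    calc d ≤ c'.support.card := hd_le
      _ ≤ ((gh * sct).support.image (fun j => u₀ + j * p ^ s)).card :=
          Finset.card_le_card hsub1
      _ ≤ (gh * sct).support.card := Finset.card_image_le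
      _ ≤ _ := Finset.card_le_card hsub2
  refine ⟨?_, ?_, ?_, ?_, ?_, ?_, ?_⟩
  -- (1) degree < n'
  · rintro cf ⟨c, _, _, rfl⟩
    exact foldPoly_degree_lt ζ (p ^ s) n' c
  -- (2) additivity
  · intro cf₁ h1 cf₂ h2
    rw [key] at h1 h2 ⊢
    obtain ⟨b₁, hb₁, rfl⟩ := h1
    obtain ⟨b₂, hb₂, rfl⟩ := h2
    exact ⟨b₁ + b₂, lt_of_le_of_lt (Polynomial.degree_add_le _ _) (max_lt hb₁ hb₂),
      (mul_add _ _ _).symm⟩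
  -- (3) scalar multiplication
  · intro a cf h
    rw [key] at h ⊢
    obtain ⟨b, hb, rfl⟩ := h
    refine ⟨a • b, lt_of_le_of_lt (Polynomial.degree_smul_le a b) hb, ?_⟩
    rw [Polynomial.smul_eq_C_mul, Polynomial.smul_eq_C_mul, mul_left_comm]
  -- (4) cyclicity
  · intro cf h
    rw [key] at h ⊢
    obtain ⟨b, hb, rfl⟩ := h
    obtain ⟨hW, hWeq⟩ := hgL_dvd
    have hmonicXn : (X ^ n' - 1 : Polynomial L).Monic := by
      have := Polynomial.monic_X_pow_sub_C (1 : L) hn'0.ne'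
      simpa using this
    set D : Polynomial L := (X * (gL * b)) /ₘ (X ^ n' - 1) with hD_def
    have hre : (X * (gL * b)) %ₘ (X ^ n' - 1) = gL * (X * b - hW * D) := by
      rw [Polynomial.modByMonic_eq_sub_mul_div _ (X ^ n' - 1 : Polynomial L), ← hD_def, hWeq]
      ring
    refine ⟨X * b - hW * D, ?_, hre⟩
    have hdeg' : (gL * (X * b - hW * D)).degree < (n' : WithBot ℕ) := by
      rw [← hre]
      have h1 := Polynomial.degree_modByMonic_lt (X * (gL * b)) hmonicXn
      have h2 : (X ^ n' - 1 : Polynomial L).degree = (n' : WithBot ℕ) := by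
        have h3 := Polynomial.degree_X_pow_sub_C hn'0 (1 : L)
        simpa using h3
      rwa [h2] at h1
    rcases eq_or_ne (X * b - hW * D) 0 with h0 | h0
    · rw [h0, Polynomial.degree_zero]
      exact WithBot.bot_lt_coe k'
    · rw [Polynomial.degree_mul, Polynomial.degree_eq_natDegree hgL_ne, hgLdeg,
        Polynomial.degree_eq_natDegree h0] at hdeg'
      rw [Polynomial.degree_eq_natDegree h0]
      have h1 : DF.card + (X * b - hW * D).natDegree < n' := by exact_mod_cast hdeg'
      have h2 : (X * b - hW * D).natDegree < k' := by omega
      exact_mod_cast h2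
  -- (5) cardinality
  · have hset : CF = (fun b => gL * b) '' {b : Polynomial L | b.degree < (k' : WithBot ℕ)} := by
      ext cf
      rw [key cf]
      constructor
      · rintro ⟨b, hb, rfl⟩
        exact ⟨b, hb, rfl⟩
      · rintro ⟨b, hb, rfl⟩
        exact ⟨b, hb, rfl⟩
    rw [hset, Nat.card_image_of_injective (mul_right_injective₀ hgL_ne)]
    have e1 : {b : Polynomial L | b.degree < (k' : WithBot ℕ)} ≃ (Fin k' → L) :=
      (Equiv.subtypeEquivRight (fun b => Polynomial.mem_degreeLT.symm)).trans
        (Polynomial.degreeLTEquiv L k').toEquiv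
    rw [Nat.card_congr e1, Nat.card_eq_fintype_card, Fintype.card_fun, Fintype.card_fin]
  -- (6) minimum distance
  · constructor
    · obtain ⟨c, hcdeg, hcdvd, hcne, hdw⟩ := hd.1
      have hcfmem : foldPoly F L ζ (p ^ s) n' c ∈ CF := ⟨c, hcdeg, hcdvd, rfl⟩
      have hND : c.natDegree < p ^ s * n' :=
        (Polynomial.natDegree_lt_iff_degree_lt hcne).2 hcdeg
      have hj : c.natDegree / p ^ s < n' := Nat.div_lt_of_lt_mul hND
      have hcfne : foldPoly F L ζ (p ^ s) n' c ≠ 0 := by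
        intro h0
        have h1 : (foldPoly F L ζ (p ^ s) n' c).coeff (c.natDegree / p ^ s) = 0 := by
          rw [h0, Polynomial.coeff_zero]
        rw [foldPoly_coeff, if_pos hj] at h1
        have h2 := fold_linindep ζ bζ hbζ _ h1 (c.natDegree % p ^ s) (Nat.mod_lt _ hps)
        have h2' : c.coeff (c.natDegree % p ^ s + c.natDegree / p ^ s * p ^ s) = 0 := h2
        rw [Nat.mod_add_div'] at h2'
        exact Polynomial.leadingCoeff_ne_zero.2 hcne h2'
      have hwle : (foldPoly F L ζ (p ^ s) n' c).support.card ≤ c.support.card := by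
        refine le_trans (Finset.card_le_card ?_) (Finset.card_image_le
          (f := fun N => N / p ^ s) (s := c.support))
        intro j hj'
        rw [Polynomial.mem_support_iff, foldPoly_coeff] at hj'
        by_cases hjn : j < n'
        · rw [if_pos hjn] at hj'
          obtain ⟨u, hu, hne⟩ := Finset.exists_ne_zero_of_sum_ne_zero hj'
          rw [Finset.mem_range] at hu
          have hcu : c.coeff (u + j * p ^ s) ≠ 0 := by
            intro h0
            rw [h0, map_zero, zero_mul] at hne
            exact hne rfl
          rw [Finset.mem_image]
          refine ⟨u + j * p ^ s, Polynomial.mem_support_iff.2 hcu, ?_⟩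
          rw [Nat.add_mul_div_right _ _ hps, Nat.div_eq_of_lt hu, zero_add]
        · rw [if_neg hjn] at hj'
          exact absurd rfl hj'
      have hge : d ≤ (foldPoly F L ζ (p ^ s) n' c).support.card :=
        hlb _ ⟨_, hcfmem, hcfne, rfl⟩
      exact ⟨foldPoly F L ζ (p ^ s) n' c, hcfmem, hcfne,
        le_antisymm hge (hdw ▸ hwle)⟩
    · exact hlb
  -- (7) simple-root cyclic code structure
  · intro hinv
    haveI : CharP Ω p := hcharΩ
    refine ⟨gL, hgL_monic, ?_, ?_⟩
    · -- gL maps to the product of X - γ^i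
      have hcomm : (algebraMap F Ω).comp (iterateFrobenius F p s) =
          (iterateFrobenius Ω p s).comp (algebraMap F Ω) := by
        ext x
        rw [RingHom.comp_apply, RingHom.comp_apply, iterateFrobenius_def,
          iterateFrobenius_def, map_pow]
      have h1 : gL.map (algebraMap L Ω) = gh.map (algebraMap F Ω) := by
        rw [hgL_def, Polynomial.map_map, ← IsScalarTower.algebraMap_eq]
      rw [h1, hgh_def, Polynomial.map_map, hcomm, ← Polynomial.map_map, hg_roots,
        Polynomial.map_prod]
      have h2 : ∀ i ∈ DF, (X - C ((γ ^ i : Ωˣ) : Ω)).map (iterateFrobenius Ω p s) =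
          X - C ((γ ^ ((p ^ s * i) % n') : Ωˣ) : Ω) := by
        intro i hi
        rw [Polynomial.map_sub, Polynomial.map_X, Polynomial.map_C]
        congr 1
        rw [iterateFrobenius_def]
        have h3 : ((γ ^ i : Ωˣ) : Ω) ^ p ^ s = ((γ ^ (p ^ s * i) : Ωˣ) : Ω) := by
          push_cast
          rw [← pow_mul, mul_comm i (p ^ s)]
        rw [h3, ← hγ, pow_mod_orderOf]
      rw [Finset.prod_congr rfl h2]
      -- reindex the product
      have hinj : ∀ i ∈ DF, ∀ i' ∈ DF,
          (p ^ s * i) % n' = (p ^ s * i') % n' → i = i' := by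
        intro i hi i' hi' h
        have hco : Nat.gcd n' (p ^ s) = 1 := hn'p.pow_right s
        have hmod : p ^ s * i ≡ p ^ s * i' [MOD n'] := h
        have := Nat.ModEq.cancel_left_of_coprime hco hmod
        rw [Nat.ModEq, Nat.mod_eq_of_lt (hDF_sub i hi), Nat.mod_eq_of_lt (hDF_sub i' hi')] at this
        exact this
      have himg : DF.image (fun i => (p ^ s * i) % n') = DF := by
        apply Finset.eq_of_subset_of_card_le
        · intro x hx
          rw [Finset.mem_image] at hx
          obtain ⟨i, hi, rfl⟩ := hx
          exact hinv i hi
        · rw [Finset.card_image_of_injOn (fun i hi i' hi' h => hinj i hi i' hi' h)]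
      refine Finset.prod_bij (fun i _ => (p ^ s * i) % n') ?_ ?_ ?_ ?_
      · intro i hi
        exact hinv i hi
      · intro i hi i' hi' h
        exact hinj i hi i' hi' h
      · intro b hb
        rw [← himg, Finset.mem_image] at hb
        obtain ⟨i, hi, hieq⟩ := hb
        exact ⟨i, hi, hieq⟩
      · intro i hi
        rfl
    · -- membership characterization
      intro cf
      rw [key cf]
      constructor
      · rintro ⟨b, hb, rfl⟩
        constructor
        · rcases eq_or_ne b 0 with rfl | hbne
          · rw [mul_zero, Polynomial.degree_zero]
            exact WithBot.bot_lt_coe n'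
          · rw [Polynomial.degree_mul, Polynomial.degree_eq_natDegree hgL_ne, hgLdeg,
              Polynomial.degree_eq_natDegree hbne]
            have h1 : b.natDegree < k' := by
              rw [Polynomial.degree_eq_natDegree hbne] at hb
              exact_mod_cast hb
            have h2 : DF.card + b.natDegree < n' := by omega
            exact_mod_cast h2
        · exact Dvd.intro _ rfl
      · rintro ⟨hdeg, b, rfl⟩
        refine ⟨b, ?_, rfl⟩
        rcases eq_or_ne b 0 with rfl | hbne
        · rw [Polynomial.degree_zero]
          exact WithBot.bot_lt_coe k'
        · rw [Polynomial.degree_mul, Polynomial.degree_eq_natDegree hgL_ne, hgLdeg,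
            Polynomial.degree_eq_natDegree hbne] at hdeg
          have h1 : DF.card + b.natDegree < n' := by exact_mod_cast hdeg
          have h2 : b.natDegree < k' := by omega
          rw [Polynomial.degree_eq_natDegree hbne]
          exact_mod_cast h2
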